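/- arXiv:2303.13208 — 6 statements merged into one kernel-verified Lean document; each statement's English description precedes it below -/
import Mathlib

section
/- Let Φ be a commutative ring in which 2 is invertible, A, B Φ-modules and ψ : A × A → B bilinear. Let G be A × B with the operation (a,b)·(c,d) = (a+c, b+d+ψ(a,c)), and let L be A × B with the operation (a,b)∗(c,d) = (a+c, b+d+(ψ(a,c)−ψ(c,a))/2). Then the map (a,b) ↦ (a, b − ψ(a,a)/2) is a group isomorphism from G to L. -/
/-- If 2 is invertible in Φ, the map (a,b) ↦ (a, b − ψ(a,a)/2) is a group
isomorphism from G = (A × B, (a,b)·(c,d) = (a+c, b+d+ψ(a,c))) to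
L = (A × B, (a,b)∗(c,d) = (a+c, b+d+(ψ(a,c)−ψ(c,a))/2)). -/
theorem reparametrization_iso (Φ : Type*) [CommRing Φ] [Invertible (2 : Φ)]
    (A B : Type*) [AddCommGroup A] [Module Φ A] [AddCommGroup B] [Module Φ B]
    (ψ : A →ₗ[Φ] A →ₗ[Φ] B) :
    let mulG : A × B → A × B → A × B := fun p q => (p.1 + q.1, p.2 + q.2 + ψ p.1 q.1)
    let mulL : A × B → A × B → A × B := fun p q =>
      (p.1 + q.1, p.2 + q.2 + (⅟(2 : Φ)) • (ψ p.1 q.1 - ψ q.1 p.1))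
    let f : A × B → A × B := fun p => (p.1, p.2 - (⅟(2 : Φ)) • ψ p.1 p.1)
    Function.Bijective f ∧ ∀ p q : A × B, f (mulG p q) = mulL (f p) (f q) := by
  intro mulG mulL f
  constructor
  · refine Function.bijective_iff_has_inverse.mpr
      ⟨fun p => (p.1, p.2 + (⅟(2 : Φ)) • ψ p.1 p.1), fun p => ?_, fun p => ?_⟩ <;>
      simp [f]
  · intro p q
    simp only [f, mulG, mulL, Prod.mk.injEq, map_add, LinearMap.add_apply, smul_add, smul_sub]
    refine ⟨trivial, ?_⟩
    have h2 : (⅟(2:Φ)) • ψ p.1 q.1 + (⅟(2:Φ)) • ψ p.1 q.1 = ψ p.1 q.1 := by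
      rw [← two_smul Φ, smul_smul, mul_invOf_self, one_smul]
    nth_rewrite 1 [← h2]
    abel
end

section
/- Let H be a bialgebra over a commutative ring Φ. Define Z_m = ker((Id − ηε)^{⊗(m+1)} ∘ Δ^m), where Δ^1 = Δ and Δ^{m+1} = (Δ^m ⊗ Id) ∘ Δ. Then Z_m ⊆ Z_{m+1} for all m ≥ 1. -/
open TensorProduct

noncomputable section

variable (Φ : Type) [CommRing Φ] (H : Type) [Ring H] [Bialgebra Φ H]

/-- Iterated tensor powers: `Tpow Φ H m` is `H^{⊗(m+1)}` (nested to the left). -/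
def Tpow : ℕ → ModuleCat Φ := fun n =>
  Nat.rec (ModuleCat.of Φ H) (fun _ T => ModuleCat.of Φ (T ⊗[Φ] H)) n

/-- Iterated comultiplication Δ^m : H → H^{⊗(m+1)}, with Δ^0 = Id and
Δ^{m+1} = (Δ^m ⊗ Id) ∘ Δ. -/
def Dpow : (m : ℕ) → H →ₗ[Φ] (Tpow Φ H m)
  | 0 => LinearMap.id
  | m + 1 =>
      (TensorProduct.map (Dpow m) (LinearMap.id : H →ₗ[Φ] H)) ∘ₗ
        (Coalgebra.comul (R := Φ) (A := H))

/-- The operator Id − ηε on H. -/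
def Emap : H →ₗ[Φ] H :=
  LinearMap.id - (Algebra.linearMap Φ H) ∘ₗ (Coalgebra.counit (R := Φ) (A := H))

/-- (Id − ηε)^{⊗(m+1)} on H^{⊗(m+1)}. -/
def Epow : (m : ℕ) → (Tpow Φ H m) →ₗ[Φ] (Tpow Φ H m)
  | 0 => Emap Φ H
  | m + 1 => TensorProduct.map (Epow m) (Emap Φ H)

-- auxiliary
def Umap : H →ₗ[Φ] H := (Algebra.linearMap Φ H) ∘ₗ (Coalgebra.counit (R := Φ) (A := H))

def I1 : H →ₗ[Φ] H ⊗[Φ] H := (TensorProduct.mk Φ H H).flip 1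
def I2 : H →ₗ[Φ] H ⊗[Φ] H := TensorProduct.mk Φ H H 1

def Cmap : (m : ℕ) → (Tpow Φ H m) →ₗ[Φ] (Tpow Φ H (m + 1))
  | 0 => (Coalgebra.comul (R := Φ) (A := H)) - I1 Φ H - I2 Φ H
  | m + 1 => TensorProduct.map (Cmap m) (LinearMap.id : H →ₗ[Φ] H)

lemma lTensor_U_comul :
    (Umap Φ H).lTensor H ∘ₗ (Coalgebra.comul (R := Φ) (A := H)) = I1 Φ H := by
  rw [Umap, LinearMap.lTensor_comp, LinearMap.comp_assoc,
    Coalgebra.lTensor_counit_comp_comul]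
  ext x
  simp [I1]

lemma rTensor_U_comul :
    (Umap Φ H).rTensor H ∘ₗ (Coalgebra.comul (R := Φ) (A := H)) = I2 Φ H := by
  rw [Umap, LinearMap.rTensor_comp, LinearMap.comp_assoc,
    Coalgebra.rTensor_counit_comp_comul]
  ext x
  simp [I2]

lemma rTensor_E_I1 : (Emap Φ H).rTensor H ∘ₗ I1 Φ H = I1 Φ H ∘ₗ Emap Φ H := by
  ext x; simp [I1]

lemma comul_U : (Coalgebra.comul (R := Φ) (A := H)) ∘ₗ Umap Φ H
    = I2 Φ H ∘ₗ Umap Φ H := by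
  ext x
  simp only [LinearMap.comp_apply, Umap, Algebra.linearMap_apply, I2,
    Bialgebra.comul_algebraMap, TensorProduct.mk_apply,
    Algebra.TensorProduct.algebraMap_apply, Algebra.algebraMap_eq_smul_one]
  rw [map_smul, Bialgebra.comul_one, Algebra.TensorProduct.one_def,
    TensorProduct.tmul_smul]

lemma key : TensorProduct.map (Emap Φ H) (Emap Φ H) ∘ₗ
      (Coalgebra.comul (R := Φ) (A := H)) = Cmap Φ H 0 ∘ₗ Emap Φ H := by
  have hE : Emap Φ H = LinearMap.id - Umap Φ H := rfl
  rw [← LinearMap.rTensor_comp_lTensor, LinearMap.comp_assoc]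
  rw [show (Emap Φ H).lTensor H = LinearMap.id - (Umap Φ H).lTensor H by
    rw [hE, LinearMap.lTensor_sub, LinearMap.lTensor_id]]
  rw [LinearMap.sub_comp, LinearMap.id_comp, lTensor_U_comul, LinearMap.comp_sub,
    rTensor_E_I1]
  rw [show (Emap Φ H).rTensor H = LinearMap.id - (Umap Φ H).rTensor H by
    rw [hE, LinearMap.rTensor_sub, LinearMap.rTensor_id]]
  rw [LinearMap.sub_comp, LinearMap.id_comp, rTensor_U_comul]
  have h1 : (Coalgebra.comul (R := Φ) (A := H)) ∘ₗ Emap Φ H =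
      (Coalgebra.comul (R := Φ) (A := H)) - I2 Φ H ∘ₗ Umap Φ H := by
    rw [hE, LinearMap.comp_sub, LinearMap.comp_id, comul_U]
  have h2 : I2 Φ H ∘ₗ Emap Φ H = I2 Φ H - I2 Φ H ∘ₗ Umap Φ H := by
    rw [hE, LinearMap.comp_sub, LinearMap.comp_id]
  show _ = ((Coalgebra.comul (R := Φ) (A := H)) - I1 Φ H - I2 Φ H) ∘ₗ Emap Φ H
  rw [LinearMap.sub_comp, LinearMap.sub_comp, h1, h2]
  abel


lemma expandEq (k : ℕ) :
    (Epow Φ H (k + 1)) ∘ₗ (Dpow Φ H (k + 1)) =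
      (TensorProduct.map ((Epow Φ H k) ∘ₗ (Dpow Φ H k)) (Emap Φ H)) ∘ₗ
        (Coalgebra.comul (R := Φ) (A := H)) := by
  show TensorProduct.map (Epow Φ H k) (Emap Φ H) ∘ₗ
      (TensorProduct.map (Dpow Φ H k) LinearMap.id ∘ₗ _) = _
  rw [← LinearMap.comp_assoc, ← TensorProduct.map_comp, LinearMap.comp_id]

lemma stepEq (m : ℕ) :
    (Epow Φ H (m + 1)) ∘ₗ (Dpow Φ H (m + 1)) =
      Cmap Φ H m ∘ₗ ((Epow Φ H m) ∘ₗ (Dpow Φ H m)) := by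
  induction m with
  | zero =>
      rw [expandEq]
      show TensorProduct.map (Emap Φ H ∘ₗ LinearMap.id) (Emap Φ H) ∘ₗ _ = _
      rw [LinearMap.comp_id, key]
      rfl
  | succ m ih =>
      rw [expandEq, ih,
        show Emap Φ H = (LinearMap.id : H →ₗ[Φ] H) ∘ₗ Emap Φ H from
          (LinearMap.id_comp _).symm,
        TensorProduct.map_comp, LinearMap.comp_assoc, ← expandEq, ← ih]
      rfl

/-- with Z_m = ker((Id − ηε)^{⊗(m+1)} ∘ Δ^m), one has Z_m ⊆ Z_{m+1}
for all m ≥ 1. -/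
theorem Z_mono (m : ℕ) (hm : 1 ≤ m) :
    LinearMap.ker ((Epow Φ H m) ∘ₗ (Dpow Φ H m)) ≤
      LinearMap.ker ((Epow Φ H (m + 1)) ∘ₗ (Dpow Φ H (m + 1))) := by
  intro x hx
  rw [LinearMap.mem_ker] at hx ⊢
  rw [stepEq]
  simp only [LinearMap.comp_apply] at hx ⊢
  rw [hx, map_zero]

end
end

section
/- For an integer n ≥ 2, let d = gcd{ C(n,i) : 0 < i < n } be the greatest common divisor of the interior binomial coefficients. Then d ≠ 1 if and only if n is a prime power p^e, in which case d = p. -/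
/-- If `a = n.factorization q`, then `q` does not divide `C(n, q^a)` (by Lucas). -/
lemma aux_not_dvd_choose (q n : ℕ) (hq : q.Prime) (hn : n ≠ 0) :
    ¬ q ∣ n.choose (q ^ n.factorization q) := by
  haveI : Fact q.Prime := ⟨hq⟩
  set a := n.factorization q with ha
  have h := Choose.choose_modEq_choose_mul_prod_range_choose (p := q) (n := n) (k := q ^ a) a
  have hdiv : q ^ a / q ^ a = 1 := Nat.div_self (pow_pos hq.pos a)
  have hprod : ∀ i ∈ Finset.range a, (n / q ^ i % q).choose (q ^ a / q ^ i % q) = 1 := by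
    intro i hi
    rw [Finset.mem_range] at hi
    have h1 : q ^ a / q ^ i = q ^ (a - i) := Nat.pow_div hi.le hq.pos
    have hz : q ^ a / q ^ i % q = 0 := by
      rw [h1, Nat.mod_eq_zero_of_dvd (dvd_pow_self q (by omega))]
    rw [hz, Nat.choose_zero_right]
  rw [Finset.prod_congr rfl hprod, Finset.prod_const_one, hdiv, Nat.choose_one_right,
    Nat.cast_one, mul_one] at h
  intro hdvd
  have h0 : (n.choose (q ^ a) : ℤ) ≡ 0 [ZMOD q] :=
    (Int.modEq_zero_iff_dvd).mpr (Int.natCast_dvd_natCast.mpr hdvd)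
  have := (h0.symm.trans h)
  have hqd : (q : ℤ) ∣ (n / q ^ a : ℕ) := (Int.modEq_zero_iff_dvd).mp this.symm
  exact Nat.not_dvd_ordCompl hq hn (Int.natCast_dvd_natCast.mp hqd)

/-- If `n` is not a prime power then the gcd of interior binomials is 1. -/
lemma aux_gcd_eq_one (n : ℕ) (hn : 2 ≤ n) (h : ∀ p e : ℕ, p.Prime → n ≠ p ^ e) :
    ((Finset.Ioo 0 n).gcd fun i => n.choose i) = 1 := by
  by_contra hd
  set d := (Finset.Ioo 0 n).gcd fun i => n.choose i with hdd
  have hq := Nat.minFac_prime hd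
  set q := d.minFac with hqdef
  have hqd : q ∣ d := Nat.minFac_dvd d
  set a := n.factorization q with hadef
  have hmem : q ^ a ∈ Finset.Ioo 0 n := by
    rw [Finset.mem_Ioo]
    refine ⟨pow_pos hq.pos a, ?_⟩
    rcases (Nat.ordProj_le q (by omega : n ≠ 0)).lt_or_eq with h' | h'
    · exact h'
    · exact absurd h'.symm (h q a hq)
  have hdc : d ∣ n.choose (q ^ a) := Finset.gcd_dvd hmem
  exact aux_not_dvd_choose q n hq (by omega) (hqd.trans hdc)

/-- If `n = p^e ≥ 2` then the gcd of interior binomials is `p`. -/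
lemma aux_gcd_eq_p (p e : ℕ) (hp : p.Prime) (h2 : 2 ≤ p ^ e) :
    ((Finset.Ioo 0 (p ^ e)).gcd fun i => (p ^ e).choose i) = p := by
  have he : e ≠ 0 := by rintro rfl; norm_num at h2
  set d := (Finset.Ioo 0 (p ^ e)).gcd fun i => (p ^ e).choose i with hdd
  have hpd : p ∣ d := by
    refine Finset.dvd_gcd fun i hi => ?_
    rw [Finset.mem_Ioo] at hi
    exact Nat.Prime.dvd_choose_pow hp (by omega) (by omega)
  have h1 : (1 : ℕ) ∈ Finset.Ioo 0 (p ^ e) := by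
    rw [Finset.mem_Ioo]; omega
  have hdn : d ∣ p ^ e := by
    have := Finset.gcd_dvd h1 (f := fun i => (p ^ e).choose i)
    simpa using this
  have hmem : p ^ (e - 1) ∈ Finset.Ioo 0 (p ^ e) := by
    rw [Finset.mem_Ioo]
    exact ⟨pow_pos hp.pos _, Nat.pow_lt_pow_right hp.one_lt (by omega)⟩
  have hdc : d ∣ (p ^ e).choose (p ^ (e - 1)) := Finset.gcd_dvd hmem
  have hem : emultiplicity p ((p ^ e).choose (p ^ (e - 1))) = (1 : ℕ) := by
    rw [Nat.Prime.emultiplicity_choose_prime_pow hp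
        (Nat.pow_le_pow_right hp.pos (by omega)) (pow_ne_zero _ hp.pos.ne'),
      multiplicity_pow_self hp.pos.ne' hp.prime.not_unit]
    congr 1
    omega
  have hp2 : ¬ p ^ 2 ∣ (p ^ e).choose (p ^ (e - 1)) := by
    intro hdvd
    have h2le := le_emultiplicity_of_pow_dvd hdvd
    rw [hem] at h2le
    exact absurd (by exact_mod_cast h2le) (by norm_num)
  obtain ⟨f, hfe, hdf⟩ := (Nat.dvd_prime_pow hp).1 hdn
  rw [hdf] at hpd hdc ⊢
  have hf1 : 1 ≤ f := by
    by_contra hf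
    interval_cases f
    rw [pow_zero] at hpd
    exact hp.one_lt.ne' (Nat.dvd_one.mp hpd)
  have hf2 : f < 2 := by
    by_contra hf
    exact hp2 ((pow_dvd_pow p (by omega)).trans hdc)
  rw [show f = 1 by omega, pow_one]

/-- For n ≥ 2, the gcd d of the interior binomial coefficients
C(n,i), 0 < i < n, satisfies: d ≠ 1 iff n is a prime power p^e, in which case d = p. -/
theorem gcd_interior_binomials (n : ℕ) (hn : 2 ≤ n) :
    (((Finset.Ioo 0 n).gcd fun i => n.choose i) ≠ 1 ↔
        ∃ p e : ℕ, p.Prime ∧ n = p ^ e) ∧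
      ∀ p e : ℕ, p.Prime → n = p ^ e →
        ((Finset.Ioo 0 n).gcd fun i => n.choose i) = p := by
  constructor
  · constructor
    · intro hd
      by_contra hno
      push_neg at hno
      exact hd (aux_gcd_eq_one n hn fun p e hp => hno p e hp)
    · rintro ⟨p, e, hp, rfl⟩
      rw [aux_gcd_eq_p p e hp hn]
      exact hp.one_lt.ne'
  · rintro p e hp rfl
    exact aux_gcd_eq_p p e hp hn
end

section
/- Let n > 2 be an even integer, say n = 2k, and let d = gcd{ C(n,i) : 1 < i < n, i ≠ k }. Then: if n = 2^e then d ∈ {2, 4}; if n = 2p^e for an odd prime p then d = p; and in all other cases d = 1. -/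
open Nat

private lemma dvd_iff_of_modEq {p a b : ℕ} (h : a ≡ b [MOD p]) : p ∣ a ↔ p ∣ b := by
  rw [← Nat.modEq_zero_iff_dvd, ← Nat.modEq_zero_iff_dvd]
  exact ⟨h.symm.trans, h.trans⟩

/-- All binomial coefficients of 2^e - 1 are odd. -/
private lemma odd_choose_two_pow_sub_one :
    ∀ e r : ℕ, r ≤ 2 ^ e - 1 → ¬ 2 ∣ Nat.choose (2 ^ e - 1) r := by
  intro e
  induction e with
  | zero =>
    intro r hr
    interval_cases r
    decide
  | succ e ih =>
    intro r hr
    haveI : Fact (Nat.Prime 2) := ⟨Nat.prime_two⟩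
    have h := Choose.choose_modEq_choose_mod_mul_choose_div_nat
      (p := 2) (n := 2 ^ (e + 1) - 1) (k := r)
    rw [dvd_iff_of_modEq h]
    have hpow : 2 ^ (e + 1) = 2 * 2 ^ e := by ring
    have hpos : 0 < 2 ^ e := Nat.pow_pos (by norm_num)
    have h1 : (2 ^ (e + 1) - 1) % 2 = 1 := by omega
    have h2 : (2 ^ (e + 1) - 1) / 2 = 2 ^ e - 1 := by omega
    rw [h1, h2]
    have hc : Nat.choose 1 (r % 2) = 1 := by
      have : r % 2 = 0 ∨ r % 2 = 1 := by omega
      rcases this with h | h <;> simp [h]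
    rw [hc, one_mul]
    exact ih (r / 2) (by omega)


private lemma mod_div_form {p a : ℕ} (hp : 2 ≤ p) (ha : 0 < a) :
    2 * (p * a) - 1 = (p - 1) + p * (2 * a - 1) ∧
    (2 * (p * a) - 1) % p = p - 1 ∧ (2 * (p * a) - 1) / p = 2 * a - 1 := by
  have hb : p * (2 * a) = 2 * (p * a) := by ring
  have hle : p ≤ p * a := Nat.le_mul_of_pos_right _ ha
  have h : 2 * (p * a) - 1 = (p - 1) + p * (2 * a - 1) := by
    rw [Nat.mul_sub, mul_one, hb]; omega
  refine ⟨h, ?_, ?_⟩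
  · rw [h, Nat.add_mul_mod_self_left, Nat.mod_eq_of_lt (by omega)]
  · rw [h, Nat.add_mul_div_left _ _ (by omega : 0 < p), Nat.div_eq_of_lt (by omega), zero_add]

/-- For odd prime p: p does not divide C(2p^{e+1}-1, 2p^e-1). -/
private lemma not_dvd_choose_aux {p : ℕ} (hp : p.Prime) (hodd : Odd p) :
    ∀ e : ℕ, ¬ p ∣ Nat.choose (2 * p ^ (e + 1) - 1) (2 * p ^ e - 1) := by
  haveI : Fact p.Prime := ⟨hp⟩
  have hp2 : 2 ≤ p := hp.two_le
  intro e
  induction e with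
  | zero =>
    intro h
    rw [show (2 * p ^ 0 - 1) = 1 by norm_num, Nat.choose_one_right] at h
    have h2 : p ∣ 2 * p ^ (0 + 1) := ⟨2, by ring⟩
    have h1 : p ∣ 2 * p ^ (0 + 1) - (2 * p ^ (0 + 1) - 1) := Nat.dvd_sub h2 h
    have hpos : 0 < p ^ (0 + 1) := Nat.pow_pos (by omega)
    have : 2 * p ^ (0 + 1) - (2 * p ^ (0 + 1) - 1) = 1 := by omega
    rw [this] at h1
    exact absurd (Nat.le_of_dvd one_pos h1) (by omega)
  | succ e ih =>
    intro h
    apply ih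
    have hq : 0 < p ^ (e + 1) := Nat.pow_pos (by omega)
    have hq0 : 0 < p ^ e := Nat.pow_pos (by omega)
    have hrw1 : p ^ (e + 1 + 1) = p * p ^ (e + 1) := by ring
    have hrw2 : p ^ (e + 1) = p * p ^ e := by ring
    have hNm : (2 * p ^ (e + 1 + 1) - 1) % p = p - 1 := by
      rw [hrw1]; exact (mod_div_form hp2 hq).2.1
    have hNd : (2 * p ^ (e + 1 + 1) - 1) / p = 2 * p ^ (e + 1) - 1 := by
      rw [hrw1]; exact (mod_div_form hp2 hq).2.2
    have hKm : (2 * p ^ (e + 1) - 1) % p = p - 1 := by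
      rw [hrw2]; exact (mod_div_form hp2 hq0).2.1
    have hKd : (2 * p ^ (e + 1) - 1) / p = 2 * p ^ e - 1 := by
      rw [hrw2]; exact (mod_div_form hp2 hq0).2.2
    have hmod := Choose.choose_modEq_choose_mod_mul_choose_div_nat
      (p := p) (n := 2 * p ^ (e + 1 + 1) - 1) (k := 2 * p ^ (e + 1) - 1)
    rw [hNm, hNd, hKm, hKd, Nat.choose_self, one_mul] at hmod
    exact (dvd_iff_of_modEq hmod).mp h

/-- p divides C(2p^e, i) for 0 < i < 2p^e, i ≠ p^e. -/
private lemma dvd_choose_two_mul_pow {p : ℕ} (hp : p.Prime) :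
    ∀ e i : ℕ, 0 < i → i < 2 * p ^ e → i ≠ p ^ e → p ∣ Nat.choose (2 * p ^ e) i := by
  haveI : Fact p.Prime := ⟨hp⟩
  have hp2 : 2 ≤ p := hp.two_le
  intro e
  induction e with
  | zero =>
    intro i h1 h2 h3
    simp only [pow_zero, mul_one] at h2 h3
    omega
  | succ e ih =>
    intro i h1 h2 h3
    have hq : 0 < p ^ e := Nat.pow_pos (by omega)
    have hmod := Choose.choose_modEq_choose_mod_mul_choose_div_nat
      (p := p) (n := 2 * p ^ (e + 1)) (k := i)
    have hNm : (2 * p ^ (e + 1)) % p = 0 := by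
      have h' : 2 * p ^ (e + 1) = (2 * p ^ e) * p := by ring
      rw [h', Nat.mul_mod_left]
    have hNd : (2 * p ^ (e + 1)) / p = 2 * p ^ e := by
      rw [show 2 * p ^ (e + 1) = p * (2 * p ^ e) by ring, Nat.mul_div_cancel_left _ (by omega)]
    rw [hNm, hNd] at hmod
    rw [dvd_iff_of_modEq hmod]
    rcases Nat.eq_zero_or_pos (i % p) with him | him
    · rw [him, Nat.choose_self, one_mul]
      have hdvd : p ∣ i := by omega
      apply ih (i / p)
      · exact Nat.div_pos (Nat.le_of_dvd h1 hdvd) (by omega)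
      · rw [Nat.div_lt_iff_lt_mul (by omega : 0 < p)]
        rw [show 2 * p ^ e * p = 2 * p ^ (e + 1) by ring]
        exact h2
      · intro hcon
        apply h3
        have hi : i = p * (i / p) := (Nat.mul_div_cancel' hdvd).symm
        rw [hi, hcon]; ring
    · rw [Nat.choose_eq_zero_of_lt him, zero_mul]
      exact dvd_zero p

/-- q does not divide C(n, q^t) when q^t || n. -/
private lemma not_dvd_choose_ord {q : ℕ} (hq : q.Prime) :
    ∀ t n : ℕ, 0 < n → q ^ t ∣ n → ¬ q ∣ n / q ^ t → ¬ q ∣ Nat.choose n (q ^ t) := by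
  haveI : Fact q.Prime := ⟨hq⟩
  have hq2 : 2 ≤ q := hq.two_le
  intro t
  induction t with
  | zero =>
    intro n hn _ hnd
    simpa [Nat.choose_one_right] using hnd
  | succ t ih =>
    intro n hn hdvd hnd h
    have hqd : q ∣ n := dvd_trans (dvd_pow_self q (Nat.succ_ne_zero t)) hdvd
    have hmod := Choose.choose_modEq_choose_mod_mul_choose_div_nat
      (p := q) (n := n) (k := q ^ (t + 1))
    have hNm : n % q = 0 := by
      obtain ⟨c, rfl⟩ := hqd
      exact Nat.mul_mod_right q c
    have hKm : (q ^ (t + 1)) % q = 0 := by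
      rw [show q ^ (t + 1) = q ^ t * q by ring, Nat.mul_mod_left]
    have hKd : (q ^ (t + 1)) / q = q ^ t := by
      rw [show q ^ (t + 1) = q * q ^ t by ring, Nat.mul_div_cancel_left _ (by omega)]
    rw [hNm, hKm, hKd, Nat.choose_self, one_mul] at hmod
    apply ih (n / q)
    · exact Nat.div_pos (Nat.le_of_dvd hn hqd) (by omega)
    · -- q^t ∣ n / q
      obtain ⟨c, hc⟩ := hdvd
      refine ⟨c, ?_⟩
      rw [hc, show q ^ (t + 1) * c = q * (q ^ t * c) by ring,
        Nat.mul_div_cancel_left _ (by omega : 0 < q)]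
    · -- ¬ q ∣ (n / q) / q ^ t
      rw [Nat.div_div_eq_div_mul, show q * q ^ t = q ^ (t + 1) by ring]
      exact hnd
    · exact (dvd_iff_of_modEq hmod).mp h

/-- For even n = 2k > 2, let d = gcd{C(n,i) : 1 < i < n, i ≠ k}. Then
d ∈ {2,4} if n = 2^e; d = p if n = 2p^e for an odd prime p; and d = 1 otherwise. -/
theorem gcd_interior_binomials_no_middle (n k : ℕ) (hk : n = 2 * k) (hn : 2 < n) :
    let d := (((Finset.Ioo 1 n).filter fun i => i ≠ k).gcd fun i => n.choose i)
    (∀ e : ℕ, n = 2 ^ e → d = 2 ∨ d = 4) ∧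
    (∀ p e : ℕ, p.Prime → Odd p → n = 2 * p ^ e → d = p) ∧
    ((¬ ∃ e : ℕ, n = 2 ^ e) → (¬ ∃ p e : ℕ, p.Prime ∧ Odd p ∧ n = 2 * p ^ e) →
      d = 1) := by
  intro d
  have hk2 : 2 ≤ k := by omega
  have hmem : ∀ i, i ∈ (Finset.Ioo 1 n).filter (fun i => i ≠ k) ↔ (1 < i ∧ i < n ∧ i ≠ k) := by
    intro i
    simp [Finset.mem_filter, Finset.mem_Ioo, and_assoc]
  have hdn : d ∣ n := by
    have hm : n - 1 ∈ (Finset.Ioo 1 n).filter (fun i => i ≠ k) :=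
      (hmem _).mpr ⟨by omega, by omega, by omega⟩
    have h : d ∣ n.choose (n - 1) := Finset.gcd_dvd (f := fun i => n.choose i) hm
    rwa [Nat.choose_symm (by omega : 1 ≤ n), Nat.choose_one_right] at h
  refine ⟨?_, ?_, ?_⟩
  · -- Case n = 2^e
    intro e he
    have he2 : 2 ≤ e := by
      by_contra hlt
      have h1 : (2:ℕ) ^ e ≤ 2 ^ 1 := Nat.pow_le_pow_right (by omega) (by omega)
      omega
    obtain ⟨f, rfl⟩ : ∃ f, e = f + 1 := ⟨e - 1, by omega⟩
    have hf1 : 1 ≤ f := by omega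
    have hpow : (2:ℕ) ^ (f + 1) = 2 * 2 ^ f := by ring
    have hkpow : k = 2 ^ f := by omega
    have h2d : 2 ∣ d := by
      apply Finset.dvd_gcd
      intro i hi
      obtain ⟨hi1, hi2, hi3⟩ := (hmem i).mp hi
      have h := dvd_choose_two_mul_pow Nat.prime_two f i (by omega)
        (by rw [← hpow, ← he]; exact hi2) (by rw [← hkpow]; exact hi3)
      rwa [← hpow, ← he] at h
    have hd4 : d ∣ 4 := by
      rcases eq_or_lt_of_le hf1 with hf2 | hf2
      · -- n = 4, use C(4,3) = 4
        have hn4 : n = 4 := by rw [he, ← hf2]; norm_num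
        have hm : 3 ∈ (Finset.Ioo 1 n).filter (fun i => i ≠ k) :=
          (hmem _).mpr ⟨by omega, by omega, by omega⟩
        have h : d ∣ n.choose 3 := Finset.gcd_dvd (f := fun i => n.choose i) hm
        rwa [show n.choose 3 = 4 from by rw [hn4]; decide] at h
      · -- e ≥ 3; use C(2^e, 2^(e-2)) = 4 * odd
        obtain ⟨g, rfl⟩ : ∃ g, f = g + 1 := ⟨f - 1, by omega⟩
        have hg1 : 1 ≤ g := by omega
        have hA : (0:ℕ) < 2 ^ (g + 2) := Nat.pow_pos (by omega)
        have hB : (0:ℕ) < 2 ^ g := Nat.pow_pos (by omega)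
        have hAB : (2:ℕ) ^ (g + 2) = 4 * 2 ^ g := by ring
        have hiS : 2 ^ g ∈ (Finset.Ioo 1 n).filter (fun i => i ≠ k) := by
          refine (hmem _).mpr ⟨?_, ?_, ?_⟩
          · have : (2:ℕ) ^ 1 ≤ 2 ^ g := Nat.pow_le_pow_right (by omega) hg1
            omega
          · rw [he]
            exact Nat.pow_lt_pow_right (by omega) (by omega)
          · rw [hkpow]
            intro hcon
            exact absurd (Nat.pow_right_injective (by omega) hcon) (by omega)
        have hdvdC : d ∣ n.choose (2 ^ g) := Finset.gcd_dvd (f := fun i => n.choose i) hiS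
        -- identity : choose (2^(g+2)) (2^g) = 4 * m
        set m := Nat.choose (2 ^ (g + 2) - 1) (2 ^ g - 1) with hm
        have hid := Nat.add_one_mul_choose_eq (2 ^ (g + 2) - 1) (2 ^ g - 1)
        rw [show 2 ^ (g + 2) - 1 + 1 = 2 ^ (g + 2) from by omega,
          show 2 ^ g - 1 + 1 = 2 ^ g from by omega, ← hm] at hid
        -- hid : 2^(g+2) * m = choose (2^(g+2)) (2^g) * 2^g
        have hident : Nat.choose (2 ^ (g + 2)) (2 ^ g) = 4 * m := by
          apply Nat.eq_of_mul_eq_mul_right hB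
          rw [← hid, hAB]
          ring
        have hmodd : ¬ 2 ∣ m := by
          apply odd_choose_two_pow_sub_one (g + 2)
          have : (2:ℕ) ^ g ≤ 2 ^ (g + 2) := Nat.pow_le_pow_right (by omega) (by omega)
          omega
        have hd4m : d ∣ 4 * m := by rw [← hident, ← he]; exact hdvdC
        have hcop : Nat.Coprime d m := by
          apply Nat.Coprime.coprime_dvd_left (he ▸ hdn)
          exact Nat.Coprime.pow_left _ ((Nat.Prime.coprime_iff_not_dvd Nat.prime_two).mpr hmodd)
        exact hcop.dvd_of_dvd_mul_right hd4m
    obtain ⟨t, ht⟩ := h2d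
    have htd : t ∣ 2 := by
      have h22 : 2 * t ∣ 2 * 2 := by rw [← ht]; exact hd4
      exact (Nat.mul_dvd_mul_iff_left (by omega : 0 < 2)).mp h22
    rcases (Nat.prime_two.eq_one_or_self_of_dvd t htd) with h | h
    · left; omega
    · right; omega
  · -- Case n = 2 * p^e
    intro p e hp hodd hne
    have hp2 := hp.two_le
    have hp3 : 3 ≤ p := by rcases hodd with ⟨t, ht⟩; omega
    have he1 : 1 ≤ e := by
      by_contra hlt
      have he0 : e = 0 := by omega
      rw [he0, pow_zero, mul_one] at hne
      omega
    obtain ⟨f, rfl⟩ : ∃ f, e = f + 1 := ⟨e - 1, by omega⟩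
    have hA : 0 < p ^ (f + 1) := Nat.pow_pos (by omega)
    have hB : 0 < p ^ f := Nat.pow_pos (by omega)
    have hAB : p ^ (f + 1) = p * p ^ f := by ring
    have hApB : p ^ f ≤ p ^ (f + 1) := Nat.pow_le_pow_right (by omega) (by omega)
    have hA3 : 3 ≤ p ^ (f + 1) := by
      have h1 : p ^ 1 ≤ p ^ (f + 1) := Nat.pow_le_pow_right (by omega) (by omega)
      rw [pow_one] at h1
      omega
    have hkpe : k = p ^ (f + 1) := by omega
    have hpd : p ∣ d := by
      apply Finset.dvd_gcd
      intro i hi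
      obtain ⟨hi1, hi2, hi3⟩ := (hmem i).mp hi
      have h := dvd_choose_two_mul_pow hp (f + 1) i (by omega)
        (by rw [← hne]; exact hi2) (by rw [← hkpe]; exact hi3)
      rwa [← hne] at h
    -- d is odd, via C(n,2) = k*(2k-1)
    have h2S : 2 ∈ (Finset.Ioo 1 n).filter (fun i => i ≠ k) :=
      (hmem _).mpr ⟨by omega, by omega, by omega⟩
    have hdC2 : d ∣ n.choose 2 := Finset.gcd_dvd (f := fun i => n.choose i) h2S
    have hC2 : n.choose 2 = k * (n - 1) := by
      rw [Nat.choose_two_right, hk]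
      rw [show 2 * k * (2 * k - 1) = 2 * (k * (2 * k - 1)) from by ring,
        Nat.mul_div_cancel_left _ (by omega : 0 < 2)]
    have hC2odd : ¬ 2 ∣ k * (n - 1) := by
      have hkodd : Odd k := hkpe ▸ hodd.pow
      have hnodd : Odd (n - 1) := by
        rcases hkodd with ⟨t, ht⟩
        exact ⟨2 * t, by omega⟩
      rcases hkodd.mul hnodd with ⟨t, ht⟩
      omega
    have hdodd : ¬ 2 ∣ d := fun h2 => hC2odd (h2.trans (hC2 ▸ hdC2))
    have hdpe : d ∣ p ^ (f + 1) := by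
      have hcop2 : Nat.Coprime d 2 :=
        Nat.coprime_comm.mp ((Nat.Prime.coprime_iff_not_dvd Nat.prime_two).mpr hdodd)
      exact hcop2.dvd_of_dvd_mul_left (by rw [← hne]; exact hdn)
    -- i1 = 2 * p^f
    have hi1S : 2 * p ^ f ∈ (Finset.Ioo 1 n).filter (fun i => i ≠ k) := by
      refine (hmem _).mpr ⟨by omega, ?_, ?_⟩
      · rw [hne]
        have : p ^ f < p ^ (f + 1) := Nat.pow_lt_pow_right (by omega) (by omega)
        omega
      · rw [hkpe, hAB]
        intro hcon
        have := Nat.eq_of_mul_eq_mul_right hB hcon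
        omega
    have hdvdC : d ∣ n.choose (2 * p ^ f) := Finset.gcd_dvd (f := fun i => n.choose i) hi1S
    set m := Nat.choose (2 * p ^ (f + 1) - 1) (2 * p ^ f - 1) with hm
    have hid := Nat.add_one_mul_choose_eq (2 * p ^ (f + 1) - 1) (2 * p ^ f - 1)
    rw [show 2 * p ^ (f + 1) - 1 + 1 = 2 * p ^ (f + 1) from by omega,
      show 2 * p ^ f - 1 + 1 = 2 * p ^ f from by omega, ← hm] at hid
    have hident : Nat.choose (2 * p ^ (f + 1)) (2 * p ^ f) = p * m := by
      apply Nat.eq_of_mul_eq_mul_right (by omega : 0 < 2 * p ^ f)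
      rw [← hid, hAB]
      ring
    have hpm : ¬ p ∣ m := not_dvd_choose_aux hp hodd f
    have hdpm : d ∣ p * m := by rw [← hident, ← hne]; exact hdvdC
    have hcopm : Nat.Coprime d m := by
      apply Nat.Coprime.coprime_dvd_left hdpe
      exact Nat.Coprime.pow_left _ ((Nat.Prime.coprime_iff_not_dvd hp).mpr hpm)
    exact Nat.dvd_antisymm (hcopm.dvd_of_dvd_mul_right hdpm) hpd
  · -- Remaining case
    intro hEx2 hExP
    by_contra hd1
    obtain ⟨q, hq, hqd⟩ := Nat.exists_prime_and_dvd hd1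
    have hqn : q ∣ n := hqd.trans hdn
    set t := n.factorization q with ht
    have hpt : q ^ t ∣ n := Nat.ordProj_dvd n q
    have hnc : ¬ q ∣ n / q ^ t := Nat.not_dvd_ordCompl hq (by omega)
    have hsplit : q ^ t * (n / q ^ t) = n := Nat.ordProj_mul_ordCompl_eq_self n q
    have hqt1 : 0 < q ^ t := Nat.pow_pos hq.pos
    have hm3 : 3 ≤ n / q ^ t := by
      rcases Nat.lt_or_ge (n / q ^ t) 3 with hlt | hge
      · exfalso
        interval_cases h : (n / q ^ t)
        · omega
        · rcases eq_or_ne q 2 with rfl | hq2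
          · exact hEx2 ⟨t, by omega⟩
          · have hoddq : Odd q := hq.odd_of_ne_two hq2
            have hqt : q ^ t = n := by omega
            have hoddn : Odd n := hqt ▸ hoddq.pow
            rcases hoddn with ⟨s, hs⟩
            omega
        · rcases eq_or_ne q 2 with rfl | hq2
          · exact hEx2 ⟨t + 1, by rw [← hsplit]; ring⟩
          · exact hExP ⟨q, t, hq, hq.odd_of_ne_two hq2, by omega⟩
      · exact hge
    have hqtk : q ^ t < k := by
      have h3 : q ^ t * 3 ≤ q ^ t * (n / q ^ t) := Nat.mul_le_mul_left _ hm3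
      omega
    have hiS : n - q ^ t ∈ (Finset.Ioo 1 n).filter (fun i => i ≠ k) :=
      (hmem _).mpr ⟨by omega, by omega, by omega⟩
    have hdvdC : d ∣ n.choose (n - q ^ t) := Finset.gcd_dvd (f := fun i => n.choose i) hiS
    rw [Nat.choose_symm (by omega : q ^ t ≤ n)] at hdvdC
    exact not_dvd_choose_ord hq t n (by omega) hpt hnc (hqd.trans hdvdC)
end

section
/- Let C be an associative unital Φ-algebra with involution, M a left C-module, and h : M × M → C a hermitian form. Suppose (m,a) and (n,b) satisfy a + ā = h(m,m) and b + b̄ = h(n,n). Define Q = −h(m,n)·m + a·n ∈ M and R = a b ā + h(m,n) a h(n,m) − h(m,n) h(m, a·n) ∈ C. Then R + R̄ = h(Q,Q). -/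
/-- With Q = −h(m,n)·m + a·n and
R = a b ā + h(m,n) a h(n,m) − h(m,n) h(m, a·n), if a + ā = h(m,m) and
b + b̄ = h(n,n), then R + R̄ = h(Q,Q). -/
theorem hermitian_Q_grp_lands_in_G (C M : Type*) [Ring C] [StarRing C]
    [AddCommGroup M] [Module C M]
    (h : M → M → C)
    (h_add_left : ∀ m m' n : M, h (m + m') n = h m n + h m' n)
    (h_add_right : ∀ m n n' : M, h m (n + n') = h m n + h m n')
    (h_smul : ∀ (c : C) (m n : M), h (c • m) n = c * h m n)
    (h_star : ∀ m n : M, star (h m n) = h n m)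
    (m n : M) (a b : C)
    (ha : a + star a = h m m) (hb : b + star b = h n n) :
    (a * b * star a + h m n * a * h n m - h m n * h m (a • n)) +
        star (a * b * star a + h m n * a * h n m - h m n * h m (a • n)) =
      h (-(h m n) • m + a • n) (-(h m n) • m + a • n) := by
  have hr : ∀ (c : C) (x y : M), h x (c • y) = h x y * star c := by
    intro c x y
    rw [← h_star, h_smul, star_mul, h_star]
  simp only [h_add_left, h_add_right, h_smul, hr, star_sub, star_add, star_mul, h_star,
    star_star, star_neg]
  rw [← ha, ← hb]
  noncomm_ring
end

section
/- Let A be an associative unital Φ-algebra with involution a ↦ ā, and let B = A ⊗ Φ[s]/(s² − s) with the involution determined by conj(a ⊗ s) = ā ⊗ (1 − s) (in particular s̄ = 1 − s for the central idempotent s). Equip B × B with the group operation (a,b)·(c,d) = (a+c, b+d+a c̄), and let G_B = { (a,b) ∈ B × B : b + b̄ = a ā }. Then for every x ∈ B: (i) (x, x x̄ s) ∈ G_B and (1, s) ∈ G_B, and (ii) the commutator [(x, x x̄ s), (1, s)] = (0, x − x̄) in this group. -/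
/-- Let B be the algebra A ⊗ Φ[s]/(s²−s) with involution; what matters is
that B is an associative unital Φ-algebra with involution containing the central
element s with s² = s and s̄ = 1 − s. With the group operation
(a,b)·(c,d) = (a+c, b+d+a c̄) on B × B and G_B = {(a,b) : b + b̄ = a ā}, for every
x ∈ B: (i) (x, x x̄ s) ∈ G_B and (1,s) ∈ G_B, and (ii) the group commutator
[(x, x x̄ s), (1,s)] equals (0, x − x̄). -/
theorem skew_elements_are_commutators (Φ B : Type*) [CommRing Φ]
    [Ring B] [Algebra Φ B] [StarRing B]
    (s : B) (hs_central : ∀ b : B, s * b = b * s)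
    (hs_idem : s * s = s) (hs_star : star s = 1 - s) :
    let mul : B × B → B × B → B × B := fun p q =>
      (p.1 + q.1, p.2 + q.2 + p.1 * star q.1)
    let inv : B × B → B × B := fun p => (-p.1, -p.2 + p.1 * star p.1)
    let G : Set (B × B) := {p | p.2 + star p.2 = p.1 * star p.1}
    ∀ x : B,
      ((x, x * star x * s) ∈ G ∧ ((1 : B), s) ∈ G) ∧
      mul (mul (mul (inv (x, x * star x * s)) (inv (1, s))) (x, x * star x * s))
          (1, s) = (0, x - star x) := by
  intro mul inv G x
  refine ⟨⟨?_, ?_⟩, ?_⟩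
  · show x * star x * s + star (x * star x * s) = x * star x
    rw [star_mul, star_mul, star_star, hs_star, sub_mul, one_mul,
      hs_central (x * star x)]
    abel
  · show s + star s = 1 * star 1
    rw [hs_star, star_one, one_mul]; abel
  · simp only [mul, inv, G, star_one, star_neg, star_mul, star_star, Prod.mk.injEq]
    refine ⟨by abel, ?_⟩
    noncomm_ring
end
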